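/- Fix α ∈ (0,1) and let k = ⌊αn⌋. For i.i.d. shifted exponential random variables with parameters (λ,c), the average of the first k order statistic means, (1/k)Σ_{i=1}^{k} E[X_{i:n}] = c + H_n/λ - (1/(kλ))Σ_{i=1}^{k} H_{n-i}, converges as n → ∞ to c + 1/λ + ((1-α)/(αλ)) log(1-α). -/

import Mathlib

open Filter Real Topology

/-- The `m`-th harmonic number. -/
noncomputable def H (m : ℕ) : ℝ := ∑ j ∈ Finset.Icc 1 m, (1 : ℝ) / j

lemma H_succ (m : ℕ) : H (m + 1) = H m + 1 / (m + 1) := by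
  rw [H, Finset.sum_Icc_succ_top (by omega)]
  push_cast
  rfl

lemma H_eq (m : ℕ) : H m = (harmonic m : ℝ) := by
  induction m with
  | zero => simp [H, harmonic]
  | succ n ih => rw [H_succ, harmonic_succ, ih]; push_cast; ring

lemma sum_H_range (M : ℕ) : ∑ m ∈ Finset.range M, H m = M * H M - M := by
  induction M with
  | zero => simp
  | succ n ih =>
      rw [Finset.sum_range_succ, ih, H_succ]
      push_cast
      field_simp
      ring

lemma sum_H_Icc (n k : ℕ) (hk : k ≤ n) :
    ∑ i ∈ Finset.Icc 1 k, H (n - i) = ∑ m ∈ Finset.Ico (n - k) n, H m := by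
  induction k with
  | zero => simp
  | succ j ih =>
      rw [Finset.sum_Icc_succ_top (by omega), ih (by omega),
        ← Finset.sum_Ico_consecutive (fun m => H m) (show n - (j+1) ≤ n - j by omega)
          (show n - j ≤ n by omega)]
      have h1 : n - j = (n - (j + 1)) + 1 := by omega
      rw [h1, Nat.Ico_succ_singleton, Finset.sum_singleton]
      ring

lemma sum_H_Icc' (n k : ℕ) (hk : k ≤ n) :
    ∑ i ∈ Finset.Icc 1 k, H (n - i)
      = (n : ℝ) * H n - n - (((n - k : ℕ) : ℝ) * H (n - k) - ((n - k : ℕ) : ℝ)) := by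
  rw [sum_H_Icc n k hk, Finset.sum_Ico_eq_sub _ (show n - k ≤ n by omega),
    sum_H_range, sum_H_range]

lemma floor_div_tendsto (α : ℝ) (h0 : 0 < α) (h1 : α < 1) :
    Filter.Tendsto (fun n : ℕ => (⌊α * n⌋₊ : ℝ) / n) atTop (𝓝 α) := by
  have hlow : Filter.Tendsto (fun n : ℕ => α - 1 / (n : ℝ)) atTop (𝓝 α) := by
    simpa using tendsto_const_nhds.sub (tendsto_one_div_atTop_nhds_zero_nat (𝕜 := ℝ))
  apply tendsto_of_tendsto_of_tendsto_of_le_of_le' hlow tendsto_const_nhds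
  · filter_upwards [eventually_gt_atTop 0] with n hn
    have hn' : (0 : ℝ) < n := by exact_mod_cast hn
    rw [sub_le_iff_le_add, ← add_div, le_div_iff₀ hn']
    have h2 := Nat.lt_floor_add_one (α * n)
    linarith
  · filter_upwards [eventually_gt_atTop 0] with n hn
    have hn' : (0 : ℝ) < n := by exact_mod_cast hn
    rw [div_le_iff₀ hn']
    exact Nat.floor_le (by positivity)

/-- For fixed `α ∈ (0,1)`, `k = ⌊αn⌋` and shifted exponential link delays with
rate `l > 0` and shift `c` (so that `E[X_{i:n}] = c + (H_n - H_{n-i})/l`), the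
average of the first `k` order statistic means,
`(1/k) Σ_{i=1}^k E[X_{i:n}] = c + H_n/l - (1/(k l)) Σ_{i=1}^k H_{n-i}`,
converges to `c + 1/l + ((1-α)/(α l)) log(1-α)` as `n → ∞`. -/
theorem average_order_stat_mean_tendsto (α c l : ℝ) (h0 : 0 < α) (h1 : α < 1)
    (hl : 0 < l) :
    Filter.Tendsto
      (fun n : ℕ =>
        c + H n / l - (1 / ((⌊α * n⌋₊ : ℝ) * l)) * ∑ i ∈ Finset.Icc 1 ⌊α * n⌋₊, H (n - i))
      Filter.atTop
      (nhds (c + 1 / l + ((1 - α) / (α * l)) * Real.log (1 - α))) := by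
  set k : ℕ → ℕ := fun n => ⌊α * n⌋₊ with hk
  have hkn : ∀ n : ℕ, k n ≤ n := by
    intro n
    have : ⌊α * n⌋₊ ≤ ⌊(n : ℝ)⌋₊ :=
      Nat.floor_le_floor (by nlinarith [Nat.cast_nonneg (α := ℝ) n])
    simpa using this
  have ha : Filter.Tendsto (fun n : ℕ => (k n : ℝ) / n) atTop (𝓝 α) :=
    floor_div_tendsto α h0 h1
  have h1k : ∀ᶠ n : ℕ in atTop, 1 ≤ k n := by
    filter_upwards [ha.eventually (eventually_gt_nhds (show α / 2 < α by linarith)),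
      eventually_gt_atTop 0] with n h hn
    by_contra hc
    have : k n = 0 := by omega
    rw [this] at h
    simp at h
    linarith
  have hm : Filter.Tendsto (fun n : ℕ => ((n - k n : ℕ) : ℝ) / n) atTop (𝓝 (1 - α)) := by
    apply Filter.Tendsto.congr' _ (tendsto_const_nhds.sub ha)
    filter_upwards [eventually_gt_atTop 0] with n hn
    have hn' : (0 : ℝ) < n := by exact_mod_cast hn
    rw [Nat.cast_sub (hkn n)]
    field_simp
  have hmtop : Filter.Tendsto (fun n : ℕ => n - k n) atTop atTop := by
    rw [← tendsto_natCast_atTop_iff (R := ℝ)]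
    apply Filter.Tendsto.congr' _
      ((tendsto_natCast_atTop_atTop (R := ℝ)).atTop_mul_pos (by linarith : (0:ℝ) < 1 - α) hm)
    filter_upwards [eventually_gt_atTop 0] with n hn
    have hn' : ((n : ℝ)) ≠ 0 := by positivity
    field_simp
  have hH : Filter.Tendsto (fun n : ℕ => H n - Real.log n) atTop
      (𝓝 Real.eulerMascheroniConstant) := by
    simpa [H_eq] using Real.tendsto_harmonic_sub_log
  have hHm := hH.comp hmtop
  have hlog : Filter.Tendsto (fun n : ℕ => Real.log ((n - k n : ℕ) : ℝ) - Real.log n)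
      atTop (𝓝 (Real.log (1 - α))) := by
    apply Filter.Tendsto.congr' _
      (((Real.continuousAt_log (by linarith : (1:ℝ) - α ≠ 0)).tendsto.comp hm))
    filter_upwards [eventually_gt_atTop 0, hmtop.eventually_ge_atTop 1] with n hn hmn
    have hn' : ((n : ℝ)) ≠ 0 := by positivity
    have hm' : (((n - k n : ℕ)) : ℝ) ≠ 0 := by
      have : (1:ℝ) ≤ ((n - k n : ℕ) : ℝ) := by exact_mod_cast hmn
      linarith
    simp only [Function.comp_apply]
    rw [Real.log_div hm' hn']
  have hD : Filter.Tendsto (fun n : ℕ => H (n - k n) - H n) atTop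
      (𝓝 (Real.log (1 - α))) := by
    have heq : (fun n : ℕ => H (n - k n) - H n)
        = fun n : ℕ => ((H (n - k n) - Real.log ((n - k n : ℕ) : ℝ))
            - (H n - Real.log n)) + (Real.log ((n - k n : ℕ) : ℝ) - Real.log n) := by
      funext n; ring
    rw [heq]
    simpa using (hHm.sub hH).add hlog
  have hr : Filter.Tendsto (fun n : ℕ => ((n - k n : ℕ) : ℝ) / (k n : ℝ)) atTop
      (𝓝 ((1 - α) / α)) := by
    apply Filter.Tendsto.congr' _ (hm.div ha (ne_of_gt h0))
    filter_upwards [eventually_gt_atTop 0, h1k] with n hn h1n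
    have hn' : ((n : ℝ)) ≠ 0 := by positivity
    have hk' : ((k n : ℝ)) ≠ 0 := by
      have : (1:ℝ) ≤ (k n : ℝ) := by exact_mod_cast h1n
      linarith
    simp only [Pi.div_apply]
    field_simp
  have hfinal : Filter.Tendsto
      (fun n : ℕ => c + 1 / l + (((n - k n : ℕ) : ℝ) / (k n : ℝ) / l) * (H (n - k n) - H n))
      atTop (𝓝 (c + 1 / l + ((1 - α) / (α * l)) * Real.log (1 - α))) := by
    have : (1 - α) / (α * l) = ((1 - α) / α) / l := by rw [div_div]
    rw [this]
    exact tendsto_const_nhds.add ((hr.div_const l).mul hD)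
  apply Filter.Tendsto.congr' _ hfinal
  filter_upwards [h1k, eventually_gt_atTop 0] with n h1n hn
  have hk' : ((k n : ℝ)) ≠ 0 := by
    have : (1:ℝ) ≤ (k n : ℝ) := by exact_mod_cast h1n
    linarith
  have hl' : l ≠ 0 := ne_of_gt hl
  simp only [show ⌊α * (n:ℝ)⌋₊ = k n from rfl]
  rw [sum_H_Icc' n (k n) (hkn n), Nat.cast_sub (hkn n)]
  field_simp
  ring
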